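/- The matrix of the rotation induced by M(z) = (ζz - ω)/(ω̄z + ζ̄), namely [[Re(ζ²-ω²), -Im(ζ²+ω²), 2Re(ζω)], [Im(ζ²-ω²), Re(ζ²+ω²), 2Im(ζω)], [-2Re(ζω̄), 2Im(ζω̄), |ζ|²-|ω|²]] with |ζ|² + |ω|² = 1, is a special orthogonal matrix (element of SO(3, ℝ)). -/

import Mathlib

set_option maxHeartbeats 2000000


open Complex Matrix

theorem stmt_11 (ζ ω : ℂ) (h : ‖ζ‖ ^ 2 + ‖ω‖ ^ 2 = 1) :
    (!![(ζ ^ 2 - ω ^ 2).re, -(ζ ^ 2 + ω ^ 2).im, 2 * (ζ * ω).re;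
        (ζ ^ 2 - ω ^ 2).im, (ζ ^ 2 + ω ^ 2).re, 2 * (ζ * ω).im;
        -2 * (ζ * (starRingEnd ℂ) ω).re, 2 * (ζ * (starRingEnd ℂ) ω).im,
          ‖ζ‖ ^ 2 - ‖ω‖ ^ 2]) ∈
      Matrix.specialOrthogonalGroup (Fin 3) ℝ := by
  have h' : ζ.re ^ 2 + ζ.im ^ 2 + (ω.re ^ 2 + ω.im ^ 2) = 1 := by
    have h1 := Complex.sq_norm ζ
    have h2 := Complex.sq_norm ω
    simp only [Complex.normSq_apply] at h1 h2
    nlinarith [h1, h2]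
  have habs1 : ‖ζ‖ ^ 2 = ζ.re ^ 2 + ζ.im ^ 2 := by
    rw [Complex.sq_norm]; simp [Complex.normSq_apply]; ring
  have habs2 : ‖ω‖ ^ 2 = ω.re ^ 2 + ω.im ^ 2 := by
    rw [Complex.sq_norm]; simp [Complex.normSq_apply]; ring
  rw [Matrix.mem_specialOrthogonalGroup_iff]
  constructor
  · rw [Matrix.mem_orthogonalGroup_iff]
    ext i j
    fin_cases i <;> fin_cases j <;>
      simp [Matrix.mul_apply, Fin.sum_univ_succ, Matrix.star_apply, habs1, habs2,
        Complex.sub_re, Complex.add_re, Complex.sub_im, Complex.add_im,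
        Complex.mul_re, Complex.mul_im, pow_two] <;> nlinarith [h']
  · simp [Matrix.det_fin_three, habs1, habs2,
      Complex.sub_re, Complex.add_re, Complex.sub_im, Complex.add_im,
      Complex.mul_re, Complex.mul_im, pow_two]
    linear_combination ((ζ.re ^ 2 + ζ.im ^ 2 + (ω.re ^ 2 + ω.im ^ 2)) ^ 2 +
      (ζ.re ^ 2 + ζ.im ^ 2 + (ω.re ^ 2 + ω.im ^ 2)) + 1) * h'
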